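/- Let r = (r_1,...,r_M) be a sequence of integers whose entries, read in weakly decreasing order, take distinct values c_1 > c_2 > ... > c_n, with value c_i occurring d_i times. Define δ(r) = ∑_{(i,j): i<j, r_i < r_j} (r_j − r_i). If for some index t the values c_{t−1} and c_{t+1} are 'reversed' in r (i.e., there exist positions i < j with r_i = c_{t+1} and r_j = c_{t−1}), then δ(r) ≥ d_t · min{c_t − c_{t+1}, c_{t−1} − c_t}. -/
import Mathlib


/-- The cogenus `δ(r) = ∑_{i<j, r_i<r_j} (r_j − r_i)` of a sequence `r` of length `M`. -/
def deltaSeq (M : ℕ) (r : ℕ → ℤ) : ℤ :=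
  ∑ p ∈ (Finset.range M ×ˢ Finset.range M).filter
      (fun p => p.1 < p.2 ∧ r p.1 < r p.2), (r p.2 - r p.1)

/-- Let `r` be a permutation of the multiset with distinct values `c_1 > ⋯ > c_n`
(multiplicities `d_1, …, d_n ≥ 1`).  If for some `t` the values `c_{t−1}` and `c_{t+1}`
are reversed in `r` (a `c_{t+1}` occurs before a `c_{t−1}`), then
`δ(r) ≥ d_t · min(c_t − c_{t+1}, c_{t−1} − c_t)`. -/
theorem deltaSeq_ge_of_reversal (n M : ℕ) (c : ℕ → ℤ) (d : ℕ → ℕ) (r : ℕ → ℤ)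
    (hc : ∀ i j, 1 ≤ i → i < j → j ≤ n → c j < c i)
    (hd : ∀ i, 1 ≤ i → i ≤ n → 1 ≤ d i)
    (hM : M = ∑ i ∈ Finset.Icc 1 n, d i)
    (hcount : ∀ i, 1 ≤ i → i ≤ n →
      ((Finset.range M).filter (fun m => r m = c i)).card = d i)
    (t : ℕ) (ht1 : 2 ≤ t) (ht2 : t + 1 ≤ n)
    (hrev : ∃ i j, i < j ∧ j < M ∧ r i = c (t + 1) ∧ r j = c (t - 1)) :
    (d t : ℤ) * min (c t - c (t + 1)) (c (t - 1) - c t) ≤ deltaSeq M r := by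
  obtain ⟨i, j, hij, hjM, hri, hrj⟩ := hrev
  have hlt1 : c t < c (t - 1) := hc (t - 1) t (by omega) (by omega) (by omega)
  have hlt2 : c (t + 1) < c t := hc t (t + 1) (by omega) (by omega) ht2
  have hiM : i < M := lt_trans hij hjM
  set P := (Finset.range M ×ˢ Finset.range M).filter
      (fun p => p.1 < p.2 ∧ r p.1 < r p.2) with hP
  set T := (Finset.range M).filter (fun m => r m = c t) with hT
  have hcardT : T.card = d t := hcount t (by omega) (by omega)
  have hmem : ∀ m ∈ T, m < M ∧ r m = c t := by
    intro m hm
    simp only [hT, Finset.mem_filter, Finset.mem_range] at hm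
    exact hm
  set f : ℕ → ℕ × ℕ := fun m => if i < m then (i, m) else (m, j) with hf
  have hinj : Set.InjOn f T := by
    intro a ha b hb hab
    obtain ⟨haM, hra⟩ := hmem a ha
    obtain ⟨hbM, hrb⟩ := hmem b hb
    simp only [hf] at hab
    by_cases h1 : i < a <;> by_cases h2 : i < b <;> simp [h1, h2, Prod.ext_iff] at hab
    · exact hab
    · exfalso; rw [← hab.1, hri] at hrb; omega
    · exfalso; rw [hab.1, hri] at hra; omega
    · exact hab
  have hsub : T.image f ⊆ P := by
    intro p hp
    simp only [Finset.mem_image] at hp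
    obtain ⟨m, hm, rfl⟩ := hp
    obtain ⟨hmM, hrm⟩ := hmem m hm
    simp only [hP, Finset.mem_filter, Finset.mem_product, Finset.mem_range, hf]
    by_cases h1 : i < m
    · simp only [if_pos h1]
      exact ⟨⟨hiM, hmM⟩, h1, by rw [hri, hrm]; omega⟩
    · have hmi : m ≠ i := by intro h; rw [h, hri] at hrm; omega
      simp only [if_neg h1]
      exact ⟨⟨hmM, hjM⟩, by omega, by rw [hrj, hrm]; exact hlt1⟩
  have key : ∀ p ∈ T.image f,
      min (c t - c (t + 1)) (c (t - 1) - c t) ≤ r p.2 - r p.1 := by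
    intro p hp
    simp only [Finset.mem_image] at hp
    obtain ⟨m, hm, rfl⟩ := hp
    obtain ⟨hmM, hrm⟩ := hmem m hm
    simp only [hf]
    by_cases h1 : i < m
    · simp only [if_pos h1, hri, hrm]
      exact min_le_left _ _
    · simp only [if_neg h1, hrj, hrm]
      exact min_le_right _ _
  have hnonneg : ∀ p ∈ P, p ∉ T.image f → (0:ℤ) ≤ r p.2 - r p.1 := by
    intro p hp _
    simp only [hP, Finset.mem_filter] at hp
    linarith [hp.2.2]
  calc (d t : ℤ) * min (c t - c (t + 1)) (c (t - 1) - c t)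
      = ∑ _p ∈ T.image f, min (c t - c (t + 1)) (c (t - 1) - c t) := by
        rw [Finset.sum_const, Finset.card_image_of_injOn hinj, hcardT, nsmul_eq_mul]
    _ ≤ ∑ p ∈ T.image f, (r p.2 - r p.1) := Finset.sum_le_sum key
    _ ≤ ∑ p ∈ P, (r p.2 - r p.1) := Finset.sum_le_sum_of_subset_of_nonneg hsub hnonneg
    _ = deltaSeq M r := rfl
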